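/- Let (α_n) be a strictly increasing positive sequence (for n ≥ 1, with α_0 = 0) and (γ_n) a positive strictly decreasing sequence such that α_n + γ_n ≤ 1 for all n, and suppose (α_n - α_{n-1})/(α_n γ_{n-1} - α_{n-1} γ_n) ≤ (α_{n+1} γ_n - α_n γ_{n+1})/(γ_n - γ_{n+1}) for all n ≥ 1, and γ_0 - γ_1 ≤ α_1 γ_0². Define g_0 = 1/γ_0 and g_n = (1/γ_n)(1 - α_n/g_{n-1}). Then 1 ≤ g_n ≤ (α_{n+1} γ_n - α_n γ_{n+1})/(γ_n - γ_{n+1}) for all n ≥ 0. -/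

import Mathlib

theorem stmt_1 (α γ g : ℕ → ℝ)
    (hα0 : α 0 = 0)
    (hαpos : ∀ n ≥ 1, 0 < α n)
    (hαmono : ∀ n, α n < α (n + 1))
    (hγpos : ∀ n, 0 < γ n)
    (hγmono : ∀ n, γ (n + 1) < γ n)
    (hsum : ∀ n, α n + γ n ≤ 1)
    (hcross : ∀ n ≥ 1,
      (α n - α (n - 1)) / (α n * γ (n - 1) - α (n - 1) * γ n) ≤
        (α (n + 1) * γ n - α n * γ (n + 1)) / (γ n - γ (n + 1)))
    (hinit : γ 0 - γ 1 ≤ α 1 * (γ 0) ^ 2)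
    (hg0 : g 0 = 1 / γ 0)
    (hg : ∀ n ≥ 1, g n = (1 / γ n) * (1 - α n / g (n - 1))) :
    ∀ n, 1 ≤ g n ∧ g n ≤ (α (n + 1) * γ n - α n * γ (n + 1)) / (γ n - γ (n + 1)) := by
  have hαnn : ∀ n, 0 ≤ α n := by
    intro n
    cases n with
    | zero => simp [hα0]
    | succ m => exact (hαpos (m + 1) (by omega)).le
  have hnum : ∀ n, 0 < α (n + 1) * γ n - α n * γ (n + 1) := by
    intro n
    nlinarith [hαmono n, hγmono n, hγpos (n + 1), hαnn n]
  have hden : ∀ n, 0 < γ n - γ (n + 1) := fun n => sub_pos.2 (hγmono n)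
  intro n
  induction n with
  | zero =>
    constructor
    · rw [hg0, le_div_iff₀ (hγpos 0)]
      have := hsum 0
      rw [hα0] at this; linarith
    · rw [hg0, div_le_div_iff₀ (hγpos 0) (hden 0), hα0]
      nlinarith [hγpos 0]
  | succ n ih =>
    obtain ⟨ih1, ih2⟩ := ih
    have hgpos : 0 < g n := lt_of_lt_of_le one_pos ih1
    have hge : g (n + 1) = (1 / γ (n + 1)) * (1 - α (n + 1) / g n) := by
      have := hg (n + 1) (by omega)
      simpa using this
    have hαp := hαpos (n + 1) (by omega)
    have hγp := hγpos (n + 1)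
    have hBpos : 0 < (α (n + 1) * γ n - α n * γ (n + 1)) / (γ n - γ (n + 1)) :=
      div_pos (hnum n) (hden n)
    constructor
    · rw [hge]
      have h1 : α (n + 1) / g n ≤ α (n + 1) := by
        rw [div_le_iff₀ hgpos]; nlinarith
      have h2 : α (n + 1) ≤ 1 - γ (n + 1) := by have := hsum (n + 1); linarith
      have h3 : γ (n + 1) ≤ 1 - α (n + 1) / g n := by linarith
      have h4 := mul_le_mul_of_nonneg_left h3 (le_of_lt (one_div_pos.2 hγp))
      rwa [one_div_mul_cancel hγp.ne'] at h4
    · rw [hge]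
      have hc := hcross (n + 1) (by omega)
      simp only [Nat.add_sub_cancel] at hc
      have key : (1 / γ (n + 1)) *
          (1 - α (n + 1) / ((α (n + 1) * γ n - α n * γ (n + 1)) / (γ n - γ (n + 1)))) =
          (α (n + 1) - α n) / (α (n + 1) * γ n - α n * γ (n + 1)) := by
        have hA : α (n + 1) * γ n - α n * γ (n + 1) ≠ 0 := (hnum n).ne'
        have hD : γ n - γ (n + 1) ≠ 0 := (hden n).ne'
        have h5 : 1 - α (n + 1) / ((α (n + 1) * γ n - α n * γ (n + 1)) / (γ n - γ (n + 1))) =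
            γ (n + 1) * (α (n + 1) - α n) / (α (n + 1) * γ n - α n * γ (n + 1)) := by
          rw [div_div_eq_mul_div, eq_div_iff hA, sub_mul, div_mul_cancel₀ _ hA]; ring
        rw [h5, one_div_mul_eq_div, mul_div_assoc, mul_div_cancel_left₀ _ hγp.ne']
      calc (1 / γ (n + 1)) * (1 - α (n + 1) / g n)
          ≤ (1 / γ (n + 1)) *
            (1 - α (n + 1) / ((α (n + 1) * γ n - α n * γ (n + 1)) / (γ n - γ (n + 1)))) := by
            gcongr
        _ = (α (n + 1) - α n) / (α (n + 1) * γ n - α n * γ (n + 1)) := key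
        _ ≤ _ := hc
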